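/- Let 1 ≤ R ≤ L be natural numbers. The set of values Σ_{i∈S} i, as S ranges over all R-element subsets of {1, 2, …, L}, is exactly the set of all integers m with R(R+1)/2 ≤ m ≤ R(2L − R + 1)/2; that is, every integer between the minimum possible sum R(R+1)/2 and the maximum possible sum RL − R(R−1)/2 is attained by some R-element subset of {1, …, L}. -/
import Mathlib

open Finset

/-- Gauss sum for `Icc a b`. -/
lemma gauss_Icc (a : ℕ) : ∀ b : ℕ, 2 * ∑ i ∈ Icc a b, i = (a + b) * (b + 1 - a) := by
  intro b
  induction b with
  | zero =>
    rcases Nat.eq_zero_or_pos a with rfl | ha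
    · simp
    · rw [Finset.Icc_eq_empty (by omega)]
      simp; omega
  | succ b ih =>
    rcases le_or_gt a (b + 1) with h | h
    · rw [Finset.sum_Icc_succ_top h, Nat.mul_add, ih]
      obtain ⟨t, ht⟩ : ∃ t, b + 1 = a + t := ⟨b + 1 - a, by omega⟩
      have e1 : b + 1 - a = t := by omega
      have e2 : b + 1 + 1 - a = t + 1 := by omega
      rw [e1, e2]
      have : a + (b + 1) = a + b + 1 := by omega
      nlinarith [ht]
    · rw [Finset.Icc_eq_empty (by omega)]
      simp; omega

/-- Lower bound: an `n`-element set of positive naturals has sum at least `n(n+1)/2`. -/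
lemma sum_lower (n : ℕ) : ∀ S : Finset ℕ, S.card = n → (∀ i ∈ S, 1 ≤ i) →
    n * (n + 1) ≤ 2 * ∑ i ∈ S, i := by
  induction n with
  | zero => intro S _ _; simp
  | succ k ih =>
    intro S hcard hpos
    have hne : S.Nonempty := Finset.card_pos.mp (by omega)
    set M := S.max' hne with hMdef
    have hMS : M ∈ S := S.max'_mem hne
    have hsub : S ⊆ Finset.Icc 1 M := fun i hi =>
      Finset.mem_Icc.mpr ⟨hpos i hi, S.le_max' i hi⟩
    have hM : k + 1 ≤ M := by
      have := Finset.card_le_card hsub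
      rw [Nat.card_Icc] at this
      omega
    have hrest := ih (S.erase M) (by rw [Finset.card_erase_of_mem hMS, hcard]; rfl)
      (fun i hi => hpos i (Finset.mem_of_mem_erase hi))
    have hsum : M + ∑ i ∈ S.erase M, i = ∑ i ∈ S, i :=
      Finset.add_sum_erase S id hMS
    nlinarith [hrest, hM, hsum]

/-- Upper bound: an `n`-element subset of `Icc 1 L` has sum at most `n(2L-n+1)/2`. -/
lemma sum_upper (L : ℕ) : ∀ n : ℕ, ∀ S : Finset ℕ, S ⊆ Finset.Icc 1 L → S.card = n →
    2 * ∑ i ∈ S, i + n * n ≤ n * (2 * L + 1) := by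
  intro n
  induction n with
  | zero => intro S _ hc; rw [Finset.card_eq_zero] at hc; subst hc; simp
  | succ k ih =>
    intro S hsub hcard
    have hne : S.Nonempty := Finset.card_pos.mp (by omega)
    set m := S.min' hne with hmdef
    have hmS : m ∈ S := S.min'_mem hne
    have hsub2 : S ⊆ Finset.Icc m L := fun i hi =>
      Finset.mem_Icc.mpr ⟨S.min'_le i hi, (Finset.mem_Icc.mp (hsub hi)).2⟩
    have hm : m + k ≤ L := by
      have := Finset.card_le_card hsub2
      rw [Nat.card_Icc] at this
      omega
    have hrest := ih (S.erase m) (fun i hi => hsub (Finset.mem_of_mem_erase hi))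
      (by rw [Finset.card_erase_of_mem hmS, hcard]; rfl)
    have hsum : m + ∑ i ∈ S.erase m, i = ∑ i ∈ S, i :=
      Finset.add_sum_erase S id hmS
    nlinarith [hrest, hm, hsum]

/-- If the sum of an `R`-element subset of `Icc 1 L` is not maximal, some element can
be shifted up by one. -/
lemma shift_up (L : ℕ) (S : Finset ℕ) (hS : S ⊆ Finset.Icc 1 L) (hne : S.Nonempty)
    (hlt : 2 * ∑ i ∈ S, i + S.card * S.card < S.card * (2 * L + 1)) :
    ∃ i ∈ S, i + 1 ≤ L ∧ i + 1 ∉ S := by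
  by_contra hcon
  push_neg at hcon
  -- so for every i ∈ S, either i = L or i+1 ∈ S
  have hstep : ∀ i ∈ S, i + 1 ≤ L → i + 1 ∈ S := by
    intro i hi hle
    by_contra hni
    exact hni (hcon i hi hle)
  have hchain : ∀ d : ℕ, ∀ j ∈ S, j + d ≤ L → j + d ∈ S := by
    intro d
    induction d with
    | zero => intro j hj _; simpa using hj
    | succ e ihe =>
      intro j hj hle
      have h1 : j + e ∈ S := ihe j hj (by omega)
      have h2' := hstep (j + e) h1 (by omega)
      have hE : j + (e + 1) = j + e + 1 := by omega
      rw [hE]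
      exact h2'
  set m := S.min' hne with hmdef
  have hmS : m ∈ S := S.min'_mem hne
  have hm1 : 1 ≤ m := (Finset.mem_Icc.mp (hS hmS)).1
  have hmL : m ≤ L := (Finset.mem_Icc.mp (hS hmS)).2
  have hSeq : S = Finset.Icc m L := by
    apply Finset.Subset.antisymm
    · intro i hi
      exact Finset.mem_Icc.mpr ⟨S.min'_le i hi, (Finset.mem_Icc.mp (hS hi)).2⟩
    · intro k hk
      obtain ⟨hk1, hk2⟩ := Finset.mem_Icc.mp hk
      have := hchain (k - m) m hmS (by omega)
      have hkm : m + (k - m) = k := by omega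
      rwa [hkm] at this
  rw [hSeq] at hlt
  rw [gauss_Icc, Nat.card_Icc] at hlt
  obtain ⟨t, ht⟩ : ∃ t, L + 1 - m = t := ⟨L + 1 - m, rfl⟩
  rw [ht] at hlt
  have hmt : m + t = L + 1 := by omega
  nlinarith [hlt, hmt]

/-- Every value from the minimum up to the maximum is attained. -/
lemma attain (R L : ℕ) (h1 : 1 ≤ R) (h2 : R ≤ L) :
    ∀ m : ℕ, R * (R + 1) / 2 ≤ m → 2 * m + R * R ≤ R * (2 * L + 1) →
    ∃ S : Finset ℕ, S ⊆ Finset.Icc 1 L ∧ S.card = R ∧ ∑ i ∈ S, i = m := by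
  have hdvd : 2 ∣ R * (R + 1) := (Nat.even_mul_succ_self R).two_dvd
  have hdivmul : R * (R + 1) / 2 * 2 = R * (R + 1) := Nat.div_mul_cancel hdvd
  intro m hlo
  induction m, hlo using Nat.le_induction with
  | base =>
    intro _
    refine ⟨Finset.Icc 1 R, ?_, ?_, ?_⟩
    · exact Finset.Icc_subset_Icc_right h2
    · rw [Nat.card_Icc]; omega
    · have := gauss_Icc 1 R
      have h1R : 1 + R = R + 1 := by omega
      have hR1 : R + 1 - 1 = R := by omega
      rw [h1R, hR1, Nat.mul_comm (R + 1) R] at this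
      omega
  | succ m hm ihm =>
    intro hub
    obtain ⟨S, hsub, hcard, hsum⟩ := ihm (by omega)
    have hne : S.Nonempty := Finset.card_pos.mp (by omega)
    have hlt : 2 * ∑ i ∈ S, i + S.card * S.card < S.card * (2 * L + 1) := by
      rw [hcard, hsum]; omega
    obtain ⟨i, hiS, hile, hni⟩ := shift_up L S hsub hne hlt
    have hi1 : 1 ≤ i := (Finset.mem_Icc.mp (hsub hiS)).1
    refine ⟨insert (i + 1) (S.erase i), ?_, ?_, ?_⟩
    · intro j hj
      rcases Finset.mem_insert.mp hj with rfl | hj'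
      · exact Finset.mem_Icc.mpr ⟨by omega, hile⟩
      · exact hsub (Finset.mem_of_mem_erase hj')
    · rw [Finset.card_insert_of_notMem (fun h => hni (Finset.mem_of_mem_erase h)),
        Finset.card_erase_of_mem hiS, hcard]
      omega
    · rw [Finset.sum_insert (fun h => hni (Finset.mem_of_mem_erase h))]
      have hsplit : i + ∑ j ∈ S.erase i, j = ∑ j ∈ S, j :=
        Finset.add_sum_erase S id hiS
      omega

theorem rank_sums_attain_every_intermediate_value (R L : ℕ) (h1 : 1 ≤ R) (h2 : R ≤ L) :
    {m : ℕ | ∃ S : Finset ℕ, S ⊆ Finset.Icc 1 L ∧ S.card = R ∧ ∑ i ∈ S, i = m} =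
      {m : ℕ | R * (R + 1) / 2 ≤ m ∧ m ≤ R * (2 * L - R + 1) / 2} := by
  have hdvd1 : 2 ∣ R * (R + 1) := (Nat.even_mul_succ_self R).two_dvd
  have hdm1 : R * (R + 1) / 2 * 2 = R * (R + 1) := Nat.div_mul_cancel hdvd1
  have hdvd2 : 2 ∣ R * (2 * L - R + 1) := by
    rcases Nat.even_or_odd R with h | h
    · exact Dvd.dvd.mul_right h.two_dvd _
    · refine Dvd.dvd.mul_left ?_ _
      rw [Nat.odd_iff] at h
      omega
  have hdm2 : R * (2 * L - R + 1) / 2 * 2 = R * (2 * L - R + 1) := Nat.div_mul_cancel hdvd2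
  have hkey : R * (2 * L - R + 1) + R * R = R * (2 * L + 1) := by
    rw [← Nat.mul_add]
    congr 1
    omega
  ext m
  simp only [Set.mem_setOf_eq]
  constructor
  · rintro ⟨S, hsub, hcard, hsum⟩
    have hlow := sum_lower R S hcard
      (fun i hi => (Finset.mem_Icc.mp (hsub hi)).1)
    have hup := sum_upper L R S hsub hcard
    rw [hsum] at hlow hup
    constructor
    · omega
    · omega
  · rintro ⟨hlo, hhi⟩
    exact attain R L h1 h2 m hlo (by omega)
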